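/- Let f : ℝⁿ → ℝ be differentiable with coordinate-wise L-Lipschitz continuous gradient, i.e., |∇ᵢf(x + α eᵢ) − ∇ᵢf(x)| ≤ L|α| for all x ∈ ℝⁿ, α ∈ ℝ, and every coordinate i (where eᵢ is the i-th standard basis vector). Then for any x ∈ ℝⁿ and any coordinate i, the point x⁺ = x − (1/L)∇ᵢf(x)eᵢ satisfies f(x⁺) ≤ f(x) − (1/(2L))(∇ᵢf(x))². -/

import Mathlib

open scoped RealInnerProductSpace

lemma quad_bound_1d (g d : ℝ → ℝ) (hg : ∀ t, HasDerivAt g (d t) t)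
    (L : ℝ) (hL : 0 < L) (hlip : ∀ t, |d t - d 0| ≤ L * |t|) (t : ℝ) :
    g t ≤ g 0 + t * d 0 + L / 2 * t ^ 2 := by
  set h : ℝ → ℝ := fun s => g 0 + s * d 0 + L / 2 * s ^ 2 - g s with hh
  have hh' : ∀ s, HasDerivAt h (d 0 + L * s - d s) s := by
    intro s
    have h1 : HasDerivAt (fun s : ℝ => g 0 + s * d 0 + L / 2 * s ^ 2) (d 0 + L * s) s := by
      have := ((hasDerivAt_id s).mul_const (d 0)).const_add (g 0)
      have := this.add (((hasDerivAt_pow 2 s)).const_mul (L / 2))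
      exact this.congr_deriv (by simp only [Nat.cast_ofNat]; ring)
    exact h1.sub (hg s)
  have key : 0 ≤ h t := by
    rcases le_or_gt 0 t with ht | ht
    · have mono : MonotoneOn h (Set.Ici (0:ℝ)) := by
        apply monotoneOn_of_deriv_nonneg (convex_Ici 0)
          (fun s _ => (hh' s).continuousAt.continuousWithinAt)
          (fun s _ => (hh' s).differentiableAt.differentiableWithinAt)
        intro s hs
        rw [(hh' s).deriv]
        have hs0 : 0 < s := by simpa using hs
        have := (abs_le.mp (hlip s)).2
        rw [abs_of_pos hs0] at this
        linarith
      have := mono (Set.self_mem_Ici) (Set.mem_Ici.mpr ht) ht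
      simpa [hh] using this
    · have anti : AntitoneOn h (Set.Iic (0:ℝ)) := by
        apply antitoneOn_of_deriv_nonpos (convex_Iic 0)
          (fun s _ => (hh' s).continuousAt.continuousWithinAt)
          (fun s _ => (hh' s).differentiableAt.differentiableWithinAt)
        intro s hs
        rw [(hh' s).deriv]
        have hs0 : s < 0 := by simpa using hs
        have := (abs_le.mp (hlip s)).1
        rw [abs_of_neg hs0] at this
        linarith
      have := anti (Set.mem_Iic.mpr ht.le) (Set.self_mem_Iic) ht.le
      simpa [hh] using this
  simpa [hh] using key

/-- coordinate descent progress bound under coordinate-wise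
`L`-Lipschitz continuity of the gradient. -/
theorem gauss_southwell_descent_lemma {n : ℕ}
    (f : EuclideanSpace ℝ (Fin n) → ℝ)
    (f' : EuclideanSpace ℝ (Fin n) → EuclideanSpace ℝ (Fin n))
    (hf : ∀ x, HasGradientAt f (f' x) x)
    (L : ℝ) (hL : 0 < L)
    (hlip : ∀ (x : EuclideanSpace ℝ (Fin n)) (α : ℝ) (i : Fin n),
      |f' (x + α • EuclideanSpace.single i 1) i - f' x i| ≤ L * |α|)
    (x : EuclideanSpace ℝ (Fin n)) (i : Fin n) :
    f (x - ((1 / L) * f' x i) • EuclideanSpace.single i 1)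
      ≤ f x - 1 / (2 * L) * (f' x i) ^ 2 := by
  set e : EuclideanSpace ℝ (Fin n) := EuclideanSpace.single i 1 with he
  set g : ℝ → ℝ := fun t => f (x + t • e) with hg
  set d : ℝ → ℝ := fun t => f' (x + t • e) i with hd
  have hgd : ∀ t, HasDerivAt g (d t) t := by
    intro t
    have hc : HasDerivAt (fun t : ℝ => x + t • e) e t := by
      simpa using ((hasDerivAt_id t).smul_const e).const_add x
    have hF := (hf (x + t • e)).hasFDerivAt
    have := hF.comp_hasDerivAt t hc
    refine this.congr_deriv ?_
    simp [hd, he, InnerProductSpace.toDual_apply_apply, real_inner_comm, EuclideanSpace.inner_single_left]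
  have hlip' : ∀ t, |d t - d 0| ≤ L * |t| := by
    intro t
    simpa [hd] using hlip x t i
  have key := quad_bound_1d g d hgd L hL hlip' (-(1 / L * f' x i))
  have hd0 : d 0 = f' x i := by simp [hd]
  have hg0 : g 0 = f x := by simp [hg]
  have heq : x - ((1 / L) * f' x i) • e = x + (-(1 / L * f' x i)) • e := by
    rw [sub_eq_add_neg, neg_smul]
  rw [heq]
  have hL' : L ≠ 0 := ne_of_gt hL
  calc f (x + (-(1 / L * f' x i)) • e) = g (-(1 / L * f' x i)) := rfl
    _ ≤ g 0 + (-(1 / L * f' x i)) * d 0 + L / 2 * (-(1 / L * f' x i)) ^ 2 := key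
    _ = f x - 1 / (2 * L) * (f' x i) ^ 2 := by
        rw [hg0, hd0]; field_simp; ring
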